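/- arXiv:1701.07777 — 3 statements merged into one kernel-verified Lean document; each statement's English description precedes it below -/
import Mathlib

section
/- There exist constants C₁, C₂ > 0 such that for all natural numbers n and all integers d ≥ 1 (d fixed), C₁ · d^{-nd} · (n+1)^{(d-1)/2} ≤ ((n!)^d) / (nd)! ≤ C₂ · d^{-nd} · (n+1)^{(d-1)/2}. -/
noncomputable def sterm (m : ℕ) : ℝ := Real.sqrt (2*m) * ((m:ℝ)/Real.exp 1)^m

lemma sterm_pos {m : ℕ} (hm : 1 ≤ m) : 0 < sterm m := by
  have h1 : (0:ℝ) < m := by exact_mod_cast hm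
  unfold sterm
  positivity

lemma fact_bounds : ∃ a b : ℝ, 0 < a ∧ 0 < b ∧ ∀ m : ℕ, 1 ≤ m →
    a * sterm m ≤ m.factorial ∧ (m.factorial : ℝ) ≤ b * sterm m := by
  obtain ⟨a, ha, hab⟩ := Stirling.stirlingSeq'_bounded_by_pos_constant
  refine ⟨a, Stirling.stirlingSeq 1, ha, Stirling.stirlingSeq'_pos 0, fun m hm => ?_⟩
  obtain ⟨k, rfl⟩ := Nat.exists_eq_add_of_le hm
  have hlo := hab k
  have hhi : Stirling.stirlingSeq (k+1) ≤ Stirling.stirlingSeq 1 :=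
    Stirling.stirlingSeq'_antitone (Nat.zero_le k)
  have hs : Stirling.stirlingSeq (1+k) = (1+k).factorial / sterm (1+k) := rfl
  have hsp := sterm_pos (m := 1+k) (by omega)
  rw [add_comm 1 k] at hs hsp ⊢
  rw [hs] at hlo hhi
  exact ⟨(le_div_iff₀ hsp).mp hlo, (div_le_iff₀ hsp).mp hhi⟩

lemma key_ident (d n : ℕ) (hd : 1 ≤ d) (hn : 1 ≤ n) :
    (sterm n)^d =
      Real.sqrt (2*n) ^ (d-1) / Real.sqrt d * ((1:ℝ)/d)^(n*d) * sterm (n*d) := by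
  have hd0 : (0:ℝ) < d := by exact_mod_cast hd
  have hn0 : (0:ℝ) < n := by exact_mod_cast hn
  have hsd : (0:ℝ) < Real.sqrt d := Real.sqrt_pos.mpr hd0
  have hsplit : Real.sqrt (2*((n*d:ℕ):ℝ)) = Real.sqrt (2*n) * Real.sqrt d := by
    rw [← Real.sqrt_mul (by positivity)]
    push_cast
    ring_nf
  have hpow : (((n*d:ℕ):ℝ)/Real.exp 1)^(n*d) = ((n:ℝ)/Real.exp 1)^(n*d) * (d:ℝ)^(n*d) := by
    rw [← mul_pow]
    push_cast
    ring_nf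
  have hsq : Real.sqrt (2*n) ^ d = Real.sqrt (2*n) ^ (d-1) * Real.sqrt (2*n) := by
    conv_lhs => rw [show d = (d-1)+1 by omega, pow_succ]
  unfold sterm
  rw [hsplit, hpow, mul_pow, ← pow_mul, hsq]
  have hdp : (0:ℝ) < (d:ℝ)^(n*d) := by positivity
  field_simp
  ring
  rw [← mul_pow, mul_inv_cancel₀ hd0.ne', one_pow]

lemma rpow_conv1 (d n : ℕ) (hd : 1 ≤ d) :
    (d:ℝ) ^ (-((n:ℝ)*d)) = ((1:ℝ)/d)^(n*d) := by
  have hd0 : (0:ℝ) < d := by exact_mod_cast hd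
  have h : (-((n:ℝ)*d)) = -(((n*d:ℕ):ℝ)) := by push_cast; ring
  rw [h, Real.rpow_neg hd0.le, Real.rpow_natCast, one_div, inv_pow]

lemma rpow_conv2 (d n : ℕ) (hd : 1 ≤ d) :
    Real.sqrt (2*(n:ℝ)) ^ (d-1) = (2*(n:ℝ)) ^ (((d:ℝ)-1)/2) := by
  rw [Real.sqrt_eq_rpow, ← Real.rpow_natCast ((2*(n:ℝ)) ^ ((1:ℝ)/2)) (d-1),
    ← Real.rpow_mul (by positivity)]
  congr 1
  rw [Nat.cast_sub hd]
  push_cast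
  ring

/-- For fixed `d ≥ 1` there are constants `C₁, C₂ > 0` with
`C₁ d^{-nd} (n+1)^{(d-1)/2} ≤ (n!)^d/(nd)! ≤ C₂ d^{-nd} (n+1)^{(d-1)/2}` for all `n`. -/
theorem stmt6 (d : ℕ) (hd : 1 ≤ d) :
    ∃ C₁ C₂ : ℝ, 0 < C₁ ∧ 0 < C₂ ∧ ∀ n : ℕ,
      C₁ * (d : ℝ) ^ (-((n : ℝ) * d)) * ((n : ℝ) + 1) ^ (((d : ℝ) - 1) / 2)
          ≤ (Nat.factorial n : ℝ) ^ d / (Nat.factorial (n * d)) ∧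
      (Nat.factorial n : ℝ) ^ d / (Nat.factorial (n * d))
          ≤ C₂ * (d : ℝ) ^ (-((n : ℝ) * d)) * ((n : ℝ) + 1) ^ (((d : ℝ) - 1) / 2) := by
  obtain ⟨a, b, ha, hb, hab⟩ := fact_bounds
  have hd0 : (0:ℝ) < d := by exact_mod_cast hd
  have hsd : (0:ℝ) < Real.sqrt d := Real.sqrt_pos.mpr hd0
  have hE0 : 0 ≤ ((d:ℝ)-1)/2 := by
    have : (1:ℝ) ≤ d := by exact_mod_cast hd
    linarith
  refine ⟨min (a^d/(b*Real.sqrt d)) 1, max (b^d/(a*Real.sqrt d) * 2 ^ (((d:ℝ)-1)/2)) 1,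
    lt_min (by positivity) one_pos, lt_of_lt_of_le one_pos (le_max_right _ _), fun n => ?_⟩
  rcases Nat.eq_zero_or_pos n with rfl | hn
  · simp only [Nat.cast_zero, zero_mul, neg_zero, Real.rpow_zero, zero_add,
      Real.one_rpow, Nat.factorial_zero, Nat.cast_one, one_pow, mul_one, div_one]
    constructor
    · exact min_le_right _ _
    · exact le_max_right _ _
  · have hn0 : (0:ℝ) < n := by exact_mod_cast hn
    have hnd : 1 ≤ n * d := Nat.one_le_iff_ne_zero.mpr (by positivity)
    obtain ⟨hn1, hn2⟩ := hab n hn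
    obtain ⟨hm1, hm2⟩ := hab (n*d) hnd
    have hspn : 0 < sterm n := sterm_pos hn
    have hspm : 0 < sterm (n*d) := sterm_pos hnd
    have hfpos : (0:ℝ) < ((n*d).factorial : ℝ) := by exact_mod_cast (n*d).factorial_pos
    have hD : (d:ℝ) ^ (-((n:ℝ)*d)) = ((1:ℝ)/d)^(n*d) := rpow_conv1 d n hd
    have hDpos : (0:ℝ) < ((1:ℝ)/d)^(n*d) := by positivity
    have hR : Real.sqrt (2*(n:ℝ)) ^ (d-1) = (2*(n:ℝ)) ^ (((d:ℝ)-1)/2) := rpow_conv2 d n hd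
    -- middle identities
    have hmidlo : a^d * (sterm n)^d / (b * sterm (n*d))
        = (a^d/(b*Real.sqrt d)) * ((1:ℝ)/d)^(n*d) * (2*(n:ℝ)) ^ (((d:ℝ)-1)/2) := by
      rw [key_ident d n hd hn, ← hR]
      field_simp
    have hmidhi : b^d * (sterm n)^d / (a * sterm (n*d))
        = (b^d/(a*Real.sqrt d)) * ((1:ℝ)/d)^(n*d) * (2*(n:ℝ)) ^ (((d:ℝ)-1)/2) := by
      rw [key_ident d n hd hn, ← hR]
      field_simp
    have hnum_lo : a^d * (sterm n)^d ≤ ((n.factorial : ℝ))^d := by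
      rw [← mul_pow]
      exact pow_le_pow_left₀ (by positivity) hn1 d
    have hnum_hi : ((n.factorial : ℝ))^d ≤ b^d * (sterm n)^d := by
      rw [← mul_pow]
      exact pow_le_pow_left₀ (by positivity) hn2 d
    have hlow : a^d * (sterm n)^d / (b * sterm (n*d))
        ≤ (n.factorial : ℝ)^d / ((n*d).factorial : ℝ) := by
      gcongr
      all_goals first | positivity | exact hm2
    have hhigh : (n.factorial : ℝ)^d / ((n*d).factorial : ℝ)
        ≤ b^d * (sterm n)^d / (a * sterm (n*d)) := by
      gcongr
      all_goals first | positivity | exact hm1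
    have hbase : (n:ℝ) + 1 ≤ 2*(n:ℝ) := by linarith [show (1:ℝ) ≤ n from by exact_mod_cast hn]
    constructor
    · calc min (a^d/(b*Real.sqrt d)) 1 * (d:ℝ) ^ (-((n:ℝ)*d)) * ((n:ℝ)+1) ^ (((d:ℝ)-1)/2)
          ≤ (a^d/(b*Real.sqrt d)) * (d:ℝ) ^ (-((n:ℝ)*d)) * (2*(n:ℝ)) ^ (((d:ℝ)-1)/2) := by
            gcongr
            all_goals first | positivity | exact min_le_left _ _ | linarith
        _ = a^d * (sterm n)^d / (b * sterm (n*d)) := by rw [hD, hmidlo]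
        _ ≤ (n.factorial : ℝ)^d / ((n*d).factorial : ℝ) := hlow
    · calc (n.factorial : ℝ)^d / ((n*d).factorial : ℝ)
          ≤ b^d * (sterm n)^d / (a * sterm (n*d)) := hhigh
        _ = (b^d/(a*Real.sqrt d)) * (d:ℝ) ^ (-((n:ℝ)*d)) * (2*(n:ℝ)) ^ (((d:ℝ)-1)/2) := by
            rw [hD, hmidhi]
        _ ≤ (b^d/(a*Real.sqrt d)) * (d:ℝ) ^ (-((n:ℝ)*d))
              * (2^(((d:ℝ)-1)/2) * ((n:ℝ)+1) ^ (((d:ℝ)-1)/2)) := by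
            rw [← Real.mul_rpow (by norm_num) (by positivity)]
            gcongr
            all_goals first | positivity | linarith
        _ = (b^d/(a*Real.sqrt d) * 2^(((d:ℝ)-1)/2)) * (d:ℝ) ^ (-((n:ℝ)*d))
              * ((n:ℝ)+1) ^ (((d:ℝ)-1)/2) := by ring
        _ ≤ max (b^d/(a*Real.sqrt d) * 2 ^ (((d:ℝ)-1)/2)) 1 * (d:ℝ) ^ (-((n:ℝ)*d))
              * ((n:ℝ)+1) ^ (((d:ℝ)-1)/2) := by
            gcongr
            all_goals first | positivity | exact le_max_left _ _
end

section
/- Let σ be a Borel probability measure on the unit circle with finite 1/2-energy, i.e., I(σ) = ∫∫ |x - y|^{-1/2} dσ(x) dσ(y) < ∞. Then Σ_{n=0}^∞ |σ̂(n)|²/(n+1)^{1/2} < ∞, where σ̂(n) = ∫ z^{-n} dσ(z). -/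
open MeasureTheory ENNReal Finset

set_option linter.unusedSectionVars false
set_option linter.unnecessarySeqFocus false
set_option linter.unusedTactic false
set_option maxHeartbeats 1000000

noncomputable def aa (n : ℕ) : ℝ := (Real.sqrt ((n:ℝ)+1))⁻¹

lemma aa_nonneg (n : ℕ) : 0 ≤ aa n := inv_nonneg.2 (Real.sqrt_nonneg _)

lemma aa_anti (n : ℕ) : aa (n+1) ≤ aa n := by
  apply inv_anti₀
  · positivity
  · apply Real.sqrt_le_sqrt; push_cast; linarith

lemma head_bound (M : ℕ) : ∑ n ∈ range M, aa n ≤ 2 * Real.sqrt M := by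
  induction M with
  | zero => simp
  | succ M ih =>
    rw [Finset.sum_range_succ]
    have hs : 0 ≤ Real.sqrt M := Real.sqrt_nonneg _
    have ht : (1:ℝ) ≤ Real.sqrt (M+1) := by
      have := Real.sqrt_le_sqrt (show (1:ℝ) ≤ (M:ℝ)+1 by push_cast; linarith)
      rwa [Real.sqrt_one] at this
    have ht0 : (0:ℝ) < Real.sqrt (M+1) := by linarith
    have hsq : Real.sqrt M ^ 2 = (M:ℝ) := Real.sq_sqrt (by positivity)
    have htq : Real.sqrt ((M:ℝ)+1) ^ 2 = (M:ℝ)+1 := Real.sq_sqrt (by positivity)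
    have key : aa M ≤ 2 * Real.sqrt ((M:ℝ)+1) - 2 * Real.sqrt M := by
      rw [aa, inv_le_iff_one_le_mul₀' ht0] -- guess name
      nlinarith [sq_nonneg (Real.sqrt ((M:ℝ)+1) - Real.sqrt M)]
    push_cast
    push_cast at ih
    linarith

lemma geom_bound {w : ℂ} (hw : ‖w‖ = 1) (hw1 : w ≠ 1) (m : ℕ) :
    ‖∑ j ∈ range m, w ^ j‖ ≤ 2 / ‖1 - w‖ := by
  have h0 : (0:ℝ) < ‖1 - w‖ := by
    rw [norm_pos_iff, sub_ne_zero]; exact fun h => hw1 h.symm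
  rw [geom_sum_eq hw1, norm_div, show ‖w - 1‖ = ‖1 - w‖ from norm_sub_rev _ _]
  gcongr
  calc ‖w ^ m - 1‖ ≤ ‖w ^ m‖ + ‖(1:ℂ)‖ := norm_sub_le _ _
  _ = 2 := by rw [norm_pow, hw]; norm_num

lemma abel_bound {f : ℕ → ℝ} {g : ℕ → ℂ} {B : ℝ} (hf0 : ∀ k, 0 ≤ f k)
    (hmono : ∀ k, f (k+1) ≤ f k) (hB : ∀ m, ‖∑ j ∈ range m, g j‖ ≤ B) (K : ℕ) :
    ‖∑ k ∈ range K, f k • g k‖ ≤ f 0 * B := by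
  have hB0 : 0 ≤ B := le_trans (norm_nonneg _) (hB 0)
  have hf0' : ∀ k, f k ≤ f 0 := by
    intro k; induction k with
    | zero => exact le_refl _
    | succ k ih => exact (hmono k).trans ih
  rcases Nat.eq_zero_or_pos K with hK | hK
  · subst hK; simpa using mul_nonneg (hf0 0) hB0
  rw [Finset.sum_range_by_parts]
  calc ‖f (K-1) • ∑ j ∈ range K, g j - ∑ i ∈ range (K-1), (f (i+1) - f i) • ∑ j ∈ range (i+1), g j‖
      ≤ ‖f (K-1) • ∑ j ∈ range K, g j‖ + ‖∑ i ∈ range (K-1), (f (i+1) - f i) • ∑ j ∈ range (i+1), g j‖ :=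
        norm_sub_le _ _
    _ ≤ f (K-1) * B + ∑ i ∈ range (K-1), (f i - f (i+1)) * B := by
        apply add_le_add
        · rw [norm_smul, Real.norm_eq_abs, abs_of_nonneg (hf0 _)]
          exact mul_le_mul_of_nonneg_left (hB _) (hf0 _)
        · apply (norm_sum_le _ _).trans
          apply Finset.sum_le_sum
          intro i _
          rw [norm_smul, Real.norm_eq_abs, abs_of_nonpos (by linarith [hmono i]), neg_sub]
          exact mul_le_mul_of_nonneg_left (hB _) (by linarith [hmono i])
    _ = f (K-1) * B + (f 0 - f (K-1)) * B := by
        rw [← Finset.sum_mul, Finset.sum_range_sub' f (K-1)]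
    _ = f 0 * B := by ring

lemma key_bound {w : ℂ} (hw : ‖w‖ = 1) (hw1 : w ≠ 1) (N : ℕ) :
    ∑ n ∈ range N, (w ^ n).re * aa n ≤ 8 / Real.sqrt ‖1 - w‖ := by
  set ε := ‖1 - w‖ with hεdef
  have hε : 0 < ε := by
    rw [hεdef, norm_pos_iff, sub_ne_zero]; exact fun h => hw1 h.symm
  have hε2 : ε ≤ 2 := by
    calc ε ≤ ‖(1:ℂ)‖ + ‖w‖ := norm_sub_le _ _
    _ = 2 := by rw [hw]; norm_num
  have hsε : 0 < Real.sqrt ε := Real.sqrt_pos.2 hε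
  set M := ⌈ε⁻¹⌉₊ with hMdef
  have hM1 : ε⁻¹ ≤ (M:ℝ) := Nat.le_ceil _
  have hM2 : (M:ℝ) ≤ 3 * ε⁻¹ := by
    have h1 : (M:ℝ) < ε⁻¹ + 1 := Nat.ceil_lt_add_one (by positivity)
    have h2 : (1:ℝ) ≤ 2 / ε := (one_le_div hε).2 hε2
    rw [div_eq_mul_inv] at h2
    linarith
  have hMpos : (0:ℝ) < (M:ℝ)+1 := by positivity
  -- sqrt facts
  have hsqrt_inv : Real.sqrt ε⁻¹ = (Real.sqrt ε)⁻¹ := Real.sqrt_inv ε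
  -- head bound: ∑_{n<M} aa n ≤ 4 / √ε
  have hhead : ∀ m : ℕ, m ≤ M → ∑ n ∈ range m, aa n ≤ 4 / Real.sqrt ε := by
    intro m hm
    have h1 : ∑ n ∈ range m, aa n ≤ ∑ n ∈ range M, aa n :=
      Finset.sum_le_sum_of_subset_of_nonneg (Finset.range_subset_range.2 hm)
        (fun i _ _ => aa_nonneg i)
    have h2 := head_bound M
    have h3 : Real.sqrt (M:ℝ) ≤ Real.sqrt 3 * (Real.sqrt ε)⁻¹ := by
      rw [← hsqrt_inv, ← Real.sqrt_mul (by norm_num)]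
      exact Real.sqrt_le_sqrt hM2
    have h4 : Real.sqrt 3 ≤ 2 := by
      rw [show (2:ℝ) = Real.sqrt 4 by rw [show (4:ℝ) = 2^2 by norm_num, Real.sqrt_sq]; norm_num]
      exact Real.sqrt_le_sqrt (by norm_num)
    have h5 : 2 * Real.sqrt (M:ℝ) ≤ 4 * (Real.sqrt ε)⁻¹ := by
      nlinarith [Real.sqrt_nonneg (3:ℝ), inv_nonneg.2 (le_of_lt hsε)]
    rw [div_eq_mul_inv]
    linarith
  -- termwise: (w^n).re * aa n ≤ aa n
  have hterm : ∀ n : ℕ, (w ^ n).re * aa n ≤ aa n := by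
    intro n
    have : (w ^ n).re ≤ 1 := by
      calc (w ^ n).re ≤ ‖w ^ n‖ := Complex.re_le_norm (w ^ n)
      _ = 1 := by rw [norm_pow, hw, one_pow]
    nlinarith [aa_nonneg n]
  rcases le_or_gt N M with hNM | hNM
  · -- N ≤ M : all head
    calc ∑ n ∈ range N, (w ^ n).re * aa n ≤ ∑ n ∈ range N, aa n :=
          Finset.sum_le_sum (fun n _ => hterm n)
    _ ≤ 4 / Real.sqrt ε := hhead N hNM
    _ ≤ 8 / Real.sqrt ε := by gcongr <;> norm_num
  · -- M < N : split
    rw [← Finset.sum_range_add_sum_Ico _ (le_of_lt hNM)]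
    have htail : ∑ n ∈ Ico M N, (w ^ n).re * aa n ≤ 2 / Real.sqrt ε := by
      have hre : ∑ n ∈ Ico M N, (w ^ n).re * aa n
          = (∑ n ∈ Ico M N, aa n • w ^ n).re := by
        rw [Complex.re_sum]
        apply Finset.sum_congr rfl
        intro n _
        rw [Complex.real_smul, Complex.re_ofReal_mul, mul_comm]
      rw [hre]
      have hnorm : (∑ n ∈ Ico M N, aa n • w ^ n).re ≤ ‖∑ n ∈ Ico M N, aa n • w ^ n‖ :=
        Complex.re_le_norm _
      refine hnorm.trans ?_
      rw [Finset.sum_Ico_eq_sum_range]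
      have habel := abel_bound (f := fun k => aa (M + k)) (g := fun k => w ^ (M + k))
        (B := 2 / ε) (fun k => aa_nonneg _)
        (fun k => aa_anti (M + k)) ?hB (N - M)
      · refine habel.trans ?_
        have h1 : aa (M + 0) ≤ Real.sqrt ε := by
          rw [show M + 0 = M from rfl, aa]
          rw [inv_le_comm₀ (by positivity) hsε]
          rw [← hsqrt_inv]
          exact Real.sqrt_le_sqrt (by push_cast; linarith)
        have h2 : (0:ℝ) < 2 / ε := by positivity
        calc aa (M + 0) * (2 / ε) ≤ Real.sqrt ε * (2 / ε) :=
              mul_le_mul_of_nonneg_right h1 (le_of_lt h2)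
        _ = 2 / Real.sqrt ε := by
            rw [eq_div_iff (ne_of_gt hsε)]
            field_simp
            nlinarith [Real.sq_sqrt (le_of_lt hε), hsε]
      case hB =>
        intro m
        have : ∑ j ∈ range m, w ^ (M + j) = w ^ M * ∑ j ∈ range m, w ^ j := by
          rw [Finset.mul_sum]
          exact Finset.sum_congr rfl (fun j _ => by rw [pow_add])
        rw [this, norm_mul, norm_pow, hw, one_pow, one_mul]
        exact geom_bound hw hw1 m
    have hh := hhead M (le_refl M)
    calc ∑ n ∈ range M, (w ^ n).re * aa n + ∑ n ∈ Ico M N, (w ^ n).re * aa n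
        ≤ 4 / Real.sqrt ε + 2 / Real.sqrt ε := by
          apply add_le_add ?_ htail
          exact (Finset.sum_le_sum (fun n _ => hterm n)).trans hh
    _ ≤ 8 / Real.sqrt ε := by
        rw [← add_div]
        gcongr <;> norm_num

lemma conj_eq_inv {u : ℂ} (hu : ‖u‖ = 1) : u⁻¹ = (starRingEnd ℂ) u := by
  have h : u * (starRingEnd ℂ) u = 1 := by
    rw [Complex.mul_conj]
    norm_cast
    rw [Complex.normSq_eq_norm_sq, hu, one_pow]
  exact inv_eq_of_mul_eq_one_right h

lemma pointwise_ennreal {x y : ℂ} (hx : ‖x‖ = 1) (hy : ‖y‖ = 1) (N : ℕ) :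
    ENNReal.ofReal (∑ n ∈ range N, (((starRingEnd ℂ) x * y) ^ n).re * aa n)
      ≤ 8 * ((‖x - y‖₊ : ℝ≥0∞) ^ (-(1 / 2) : ℝ)) := by
  set w := (starRingEnd ℂ) x * y with hwdef
  have hw : ‖w‖ = 1 := by rw [hwdef, norm_mul, RCLike.norm_conj, hx, hy, one_mul]
  have h1w : 1 - w = (starRingEnd ℂ) x * (x - y) := by
    rw [mul_sub, ← hwdef]
    congr 1
    rw [mul_comm, Complex.mul_conj]
    norm_cast
    rw [Complex.normSq_eq_norm_sq, hx, one_pow]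
  have hnorm1w : ‖1 - w‖ = ‖x - y‖ := by
    rw [h1w, norm_mul, RCLike.norm_conj, hx, one_mul]
  by_cases hxy : x = y
  · subst hxy
    have : ‖x - x‖₊ = 0 := by simp
    rw [this]
    rw [ENNReal.coe_zero, ENNReal.zero_rpow_of_neg (by norm_num)]
    simp
  · have hw1 : w ≠ 1 := by
      intro h
      apply hxy
      have : (1:ℂ) - w = 0 := by rw [h, sub_self]
      rw [h1w] at this
      rcases mul_eq_zero.1 this with h' | h'
      · exfalso
        have : ‖(starRingEnd ℂ) x‖ = 1 := by rw [RCLike.norm_conj, hx]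
        rw [h'] at this; simp at this
      · exact sub_eq_zero.1 h'
    have hε : 0 < ‖x - y‖ := by
      rw [norm_pos_iff, sub_ne_zero]; exact hxy
    have hkey := key_bound hw hw1 N
    rw [hnorm1w] at hkey
    refine (ENNReal.ofReal_le_ofReal hkey).trans ?_
    have hrw : (‖x - y‖₊ : ℝ≥0∞) ^ (-(1 / 2) : ℝ)
        = ENNReal.ofReal (‖x - y‖ ^ (-(1 / 2) : ℝ)) := by
      rw [← enorm_eq_nnnorm, ← ofReal_norm, ENNReal.ofReal_rpow_of_pos hε]
    rw [hrw, ← ENNReal.ofReal_ofNat, ← ENNReal.ofReal_mul (by norm_num)]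
    apply ENNReal.ofReal_le_ofReal
    rw [Real.rpow_neg (norm_nonneg _), ← Real.sqrt_eq_rpow]
    rw [div_eq_mul_inv]

section MT
variable (σ : Measure (Metric.sphere (0 : ℂ) 1)) [IsProbabilityMeasure σ]

lemma cont_integrable {E : Type*} [NormedAddCommGroup E]
    {f : Metric.sphere (0 : ℂ) 1 → E} (hf : Continuous f) : Integrable f σ :=
  hf.integrable_of_hasCompactSupport
    (IsCompact.of_isClosed_subset isCompact_univ (isClosed_tsupport f) (Set.subset_univ _))

lemma ofReal_integral_le {f : Metric.sphere (0 : ℂ) 1 → ℝ} (hf : Integrable f σ) :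
    ENNReal.ofReal (∫ z, f z ∂σ) ≤ ∫⁻ z, ENNReal.ofReal (f z) ∂σ := by
  have h1 : ∫ z, f z ∂σ ≤ ∫ z, max (f z) 0 ∂σ :=
    integral_mono hf hf.pos_part (fun z => le_max_left _ _)
  refine (ENNReal.ofReal_le_ofReal h1).trans ?_
  rw [ofReal_integral_eq_lintegral_ofReal hf.pos_part
    (Filter.Eventually.of_forall (fun z => le_max_right _ _))]
  apply lintegral_mono
  intro z
  show ENNReal.ofReal (max (f z) 0) ≤ ENNReal.ofReal (f z)
  rcases le_total 0 (f z) with h | h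
  · rw [max_eq_left h]
  · rw [max_eq_right h, ENNReal.ofReal_zero]
    exact zero_le'

omit [IsProbabilityMeasure σ] in
lemma my_integral_re {f : Metric.sphere (0 : ℂ) 1 → ℂ} (hf : Integrable f σ) :
    ∫ z, (f z).re ∂σ = (∫ z, f z ∂σ).re := by
  simpa using integral_re (𝕜 := ℂ) hf

end MT

/-- If `σ` is a Borel probability measure on the unit circle with finite `1/2`-energy
`∫∫ |x-y|^{-1/2} dσ(x) dσ(y) < ∞`, then `Σ_{n≥0} |σ̂(n)|²/(n+1)^{1/2} < ∞`, where
`σ̂(n) = ∫ z^{-n} dσ`. -/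
theorem stmt9 (σ : Measure (Metric.sphere (0 : ℂ) 1)) [IsProbabilityMeasure σ]
    (henergy : ∫⁻ x : Metric.sphere (0 : ℂ) 1, ∫⁻ y : Metric.sphere (0 : ℂ) 1,
        ((‖(x : ℂ) - (y : ℂ)‖₊ : ℝ≥0∞) ^ (-(1 / 2) : ℝ)) ∂σ ∂σ ≠ ⊤) :
    Summable (fun n : ℕ =>
      ‖∫ z : Metric.sphere (0 : ℂ) 1, (z : ℂ) ^ (-(n : ℤ)) ∂σ‖ ^ 2
        / ((n : ℝ) + 1) ^ ((1 : ℝ) / 2)) := by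
  have hnorm : ∀ z : Metric.sphere (0 : ℂ) 1, ‖(z:ℂ)‖ = 1 := fun z =>
    mem_sphere_zero_iff_norm.1 z.2
  have hfn : ∀ n : ℕ, (fun z : Metric.sphere (0 : ℂ) 1 => (z:ℂ) ^ (-(n:ℤ)))
      = fun z : Metric.sphere (0 : ℂ) 1 => ((starRingEnd ℂ) (z:ℂ)) ^ n := by
    intro n; funext z
    rw [zpow_neg, zpow_natCast, ← inv_pow, conj_eq_inv (hnorm z)]
  set c : ℕ → ℂ := fun n => ∫ y : Metric.sphere (0 : ℂ) 1, (y:ℂ) ^ n ∂σ with hc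
  have contv : Continuous (fun z : Metric.sphere (0 : ℂ) 1 => (z:ℂ)) := continuous_subtype_val
  have contc : Continuous (fun z : Metric.sphere (0 : ℂ) 1 => (starRingEnd ℂ) (z:ℂ)) :=
    continuous_star.comp contv
  have hIntPow : ∀ n : ℕ, Integrable (fun z : Metric.sphere (0 : ℂ) 1 => (z:ℂ) ^ n) σ :=
    fun n => cont_integrable σ (contv.pow n)
  have hcoef : ∀ n : ℕ, ‖∫ z : Metric.sphere (0 : ℂ) 1, (z : ℂ) ^ (-(n : ℤ)) ∂σ‖ = ‖c n‖ := by
    intro n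
    rw [hfn n]
    have h2 : (fun z : Metric.sphere (0 : ℂ) 1 => ((starRingEnd ℂ) (z:ℂ)) ^ n)
        = fun z : Metric.sphere (0 : ℂ) 1 => (starRingEnd ℂ) ((z:ℂ) ^ n) := by
      funext z; rw [map_pow]
    rw [h2, integral_conj, RCLike.norm_conj]
  have hinner : ∀ (n : ℕ) (x : Metric.sphere (0 : ℂ) 1),
      ∫ y : Metric.sphere (0 : ℂ) 1, (((starRingEnd ℂ) (x:ℂ) * (y:ℂ)) ^ n).re ∂σ
        = (((starRingEnd ℂ) (x:ℂ)) ^ n * c n).re := by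
    intro n x
    have h1 : (fun y : Metric.sphere (0 : ℂ) 1 => (((starRingEnd ℂ) (x:ℂ) * (y:ℂ)) ^ n).re)
        = fun y : Metric.sphere (0 : ℂ) 1 =>
          ((((starRingEnd ℂ) (x:ℂ)) ^ n) * (y:ℂ) ^ n).re := by
      funext y; rw [mul_pow]
    rw [h1]
    have hI : Integrable (fun y : Metric.sphere (0 : ℂ) 1 =>
        (((starRingEnd ℂ) (x:ℂ)) ^ n) * (y:ℂ) ^ n) σ := (hIntPow n).const_mul _
    rw [my_integral_re σ hI, integral_const_mul]
  have hA : ∀ n : ℕ, ‖c n‖ ^ 2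
      = ∫ x : Metric.sphere (0 : ℂ) 1, (((starRingEnd ℂ) (x:ℂ)) ^ n * c n).re ∂σ := by
    intro n
    have hI : Integrable (fun x : Metric.sphere (0 : ℂ) 1 =>
        ((starRingEnd ℂ) (x:ℂ)) ^ n * c n) σ :=
      (cont_integrable σ (contc.pow n)).mul_const _
    rw [my_integral_re σ hI, integral_mul_const]
    have hconj : (∫ x : Metric.sphere (0 : ℂ) 1, ((starRingEnd ℂ) (x:ℂ)) ^ n ∂σ)
        = (starRingEnd ℂ) (c n) := by
      have h2 : (fun x : Metric.sphere (0 : ℂ) 1 => ((starRingEnd ℂ) (x:ℂ)) ^ n)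
          = fun x : Metric.sphere (0 : ℂ) 1 => (starRingEnd ℂ) ((x:ℂ) ^ n) := by
        funext x; rw [map_pow]
      rw [h2, integral_conj]
    rw [hconj, mul_comm, Complex.mul_conj, Complex.ofReal_re, Complex.normSq_eq_norm_sq]
  have hIG : ∀ n : ℕ, Integrable
      (fun x : Metric.sphere (0 : ℂ) 1 => (((starRingEnd ℂ) (x:ℂ)) ^ n * c n).re * aa n) σ := by
    intro n
    apply Integrable.mul_const
    exact cont_integrable σ (Complex.continuous_re.comp ((contc.pow n).mul continuous_const))
  have hB : ∀ N : ℕ, ∑ n ∈ range N, ‖c n‖ ^ 2 * aa n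
      = ∫ x : Metric.sphere (0 : ℂ) 1,
          (∑ n ∈ range N, (((starRingEnd ℂ) (x:ℂ)) ^ n * c n).re * aa n) ∂σ := by
    intro N
    rw [integral_finset_sum _ (fun n _ => hIG n)]
    refine Finset.sum_congr rfl (fun n _ => ?_)
    rw [hA n, ← integral_mul_const]
  have hB2 : ∀ (N : ℕ) (x : Metric.sphere (0 : ℂ) 1),
      (∑ n ∈ range N, (((starRingEnd ℂ) (x:ℂ)) ^ n * c n).re * aa n)
        = ∫ y : Metric.sphere (0 : ℂ) 1,
          (∑ n ∈ range N, (((starRingEnd ℂ) (x:ℂ) * (y:ℂ)) ^ n).re * aa n) ∂σ := by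
    intro N x
    rw [integral_finset_sum _ (fun n _ => by
      apply Integrable.mul_const
      apply cont_integrable σ
      exact Complex.continuous_re.comp (((continuous_const.mul contv).pow n) :
        Continuous (fun y : Metric.sphere (0:ℂ) 1 => ((starRingEnd ℂ) (x:ℂ) * (y:ℂ)) ^ n)))]
    refine Finset.sum_congr rfl (fun n _ => ?_)
    rw [integral_mul_const, hinner n x]
  have hC : ∀ N : ℕ, ENNReal.ofReal (∑ n ∈ range N, ‖c n‖ ^ 2 * aa n)
      ≤ 8 * ∫⁻ x : Metric.sphere (0 : ℂ) 1, ∫⁻ y : Metric.sphere (0 : ℂ) 1,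
        ((‖(x : ℂ) - (y : ℂ)‖₊ : ℝ≥0∞) ^ (-(1 / 2) : ℝ)) ∂σ ∂σ := by
    intro N
    rw [hB N]
    have hGcont : Continuous (fun x : Metric.sphere (0 : ℂ) 1 =>
        ∑ n ∈ range N, (((starRingEnd ℂ) (x:ℂ)) ^ n * c n).re * aa n) := by
      apply continuous_finset_sum
      intro n _
      exact (Complex.continuous_re.comp ((contc.pow n).mul continuous_const)).mul continuous_const
    refine (ofReal_integral_le σ (cont_integrable σ hGcont)).trans ?_
    have hstep : ∀ x : Metric.sphere (0 : ℂ) 1,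
        ENNReal.ofReal (∑ n ∈ range N, (((starRingEnd ℂ) (x:ℂ)) ^ n * c n).re * aa n)
        ≤ ∫⁻ y : Metric.sphere (0 : ℂ) 1,
            8 * ((‖(x : ℂ) - (y : ℂ)‖₊ : ℝ≥0∞) ^ (-(1 / 2) : ℝ)) ∂σ := by
      intro x
      rw [hB2 N x]
      have hIy : Integrable (fun y : Metric.sphere (0 : ℂ) 1 =>
          ∑ n ∈ range N, (((starRingEnd ℂ) (x:ℂ) * (y:ℂ)) ^ n).re * aa n) σ := by
        apply cont_integrable σ
        apply continuous_finset_sum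
        intro n _
        exact (Complex.continuous_re.comp ((continuous_const.mul contv).pow n)).mul
          continuous_const
      refine (ofReal_integral_le σ hIy).trans ?_
      apply lintegral_mono
      intro y
      exact pointwise_ennreal (hnorm x) (hnorm y) N
    calc ∫⁻ x : Metric.sphere (0 : ℂ) 1,
          ENNReal.ofReal (∑ n ∈ range N, (((starRingEnd ℂ) (x:ℂ)) ^ n * c n).re * aa n) ∂σ
        ≤ ∫⁻ x : Metric.sphere (0 : ℂ) 1, ∫⁻ y : Metric.sphere (0 : ℂ) 1,
            8 * ((‖(x : ℂ) - (y : ℂ)‖₊ : ℝ≥0∞) ^ (-(1 / 2) : ℝ)) ∂σ ∂σ := lintegral_mono hstep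
    _ = ∫⁻ x : Metric.sphere (0 : ℂ) 1, 8 * ∫⁻ y : Metric.sphere (0 : ℂ) 1,
            ((‖(x : ℂ) - (y : ℂ)‖₊ : ℝ≥0∞) ^ (-(1 / 2) : ℝ)) ∂σ ∂σ := by
        apply lintegral_congr
        intro x
        exact lintegral_const_mul' _ _ (by norm_num)
    _ = 8 * ∫⁻ x : Metric.sphere (0 : ℂ) 1, ∫⁻ y : Metric.sphere (0 : ℂ) 1,
            ((‖(x : ℂ) - (y : ℂ)‖₊ : ℝ≥0∞) ^ (-(1 / 2) : ℝ)) ∂σ ∂σ :=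
        lintegral_const_mul' _ _ (by norm_num)
  have hfun : (fun n : ℕ =>
      ‖∫ z : Metric.sphere (0 : ℂ) 1, (z : ℂ) ^ (-(n : ℤ)) ∂σ‖ ^ 2
        / ((n : ℝ) + 1) ^ ((1 : ℝ) / 2))
      = fun n => ‖c n‖ ^ 2 * aa n := by
    funext n
    rw [hcoef n, div_eq_mul_inv]
    congr 1
    simp only [aa]
    rw [← Real.sqrt_eq_rpow]
  rw [hfun]
  apply summable_of_sum_range_le (c := (8 * ∫⁻ x : Metric.sphere (0 : ℂ) 1,
      ∫⁻ y : Metric.sphere (0 : ℂ) 1,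
      ((‖(x : ℂ) - (y : ℂ)‖₊ : ℝ≥0∞) ^ (-(1 / 2) : ℝ)) ∂σ ∂σ).toReal)
  · intro n; exact mul_nonneg (by positivity) (aa_nonneg n)
  · intro N
    have h := hC N
    have hnn : 0 ≤ ∑ n ∈ range N, ‖c n‖ ^ 2 * aa n :=
      Finset.sum_nonneg (fun n _ => mul_nonneg (by positivity) (aa_nonneg n))
    calc ∑ n ∈ range N, ‖c n‖ ^ 2 * aa n
        = (ENNReal.ofReal (∑ n ∈ range N, ‖c n‖ ^ 2 * aa n)).toReal :=
          (ENNReal.toReal_ofReal hnn).symm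
    _ ≤ _ := ENNReal.toReal_mono (ENNReal.mul_ne_top (by norm_num) henergy) h
end

section
/- Let E ⊂ 𝕋 be compact, X = {z in the closed unit ball of ℂ² : 2 z₁ z₂ ∈ E}. If f₀ : closed disc → ℂ is continuous, holomorphic on 𝔻, with f₀ = 1 on E and |f₀| < 1 off E, then X ∩ 𝕊₂ contains the image of h(ζ₁,ζ₂) = (1/√2)(ζ₁, conj(ζ₁)ζ₂) for all ζ₁ ∈ 𝕋, ζ₂ ∈ E, and the function f₀(2z₁z₂) peaks on X. -/
/-- Let `E ⊆ 𝕋` be compact and `X = {z in the closed unit ball of ℂ² : 2z₁z₂ ∈ E}`. If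
`f₀` is continuous on the closed disc, holomorphic on `𝔻`, with `f₀ = 1` on `E` and
`|f₀| < 1` off `E`, then `X ∩ 𝕊₂` contains `h(ζ₁,ζ₂) = (1/√2)(ζ₁, conj(ζ₁)ζ₂)` for all
`ζ₁ ∈ 𝕋`, `ζ₂ ∈ E`, and `f₀(2z₁z₂)` peaks on `X`. -/
theorem stmt19 (E : Set ℂ) (hEsub : E ⊆ {w : ℂ | ‖w‖ = 1}) (hEcomp : IsCompact E)
    (f₀ : ℂ → ℂ) (hcont : ContinuousOn f₀ (Metric.closedBall 0 1))
    (hdiff : DifferentiableOn ℂ f₀ (Metric.ball 0 1))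
    (hpeak₁ : ∀ w ∈ E, f₀ w = 1)
    (hpeak₂ : ∀ w ∈ Metric.closedBall (0 : ℂ) 1, w ∉ E → ‖f₀ w‖ < 1) :
    (∀ ζ₁ ζ₂ : ℂ, ‖ζ₁‖ = 1 → ζ₂ ∈ E →
      (ζ₁ / (Real.sqrt 2 : ℂ), (starRingEnd ℂ) ζ₁ * ζ₂ / (Real.sqrt 2 : ℂ)) ∈
        ({z : ℂ × ℂ | ‖z.1‖ ^ 2 + ‖z.2‖ ^ 2 ≤ 1 ∧ 2 * z.1 * z.2 ∈ E} ∩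
          {z : ℂ × ℂ | ‖z.1‖ ^ 2 + ‖z.2‖ ^ 2 = 1})) ∧
    (∀ z : ℂ × ℂ, ‖z.1‖ ^ 2 + ‖z.2‖ ^ 2 ≤ 1 →
      (2 * z.1 * z.2 ∈ E → f₀ (2 * z.1 * z.2) = 1) ∧
      (2 * z.1 * z.2 ∉ E → ‖f₀ (2 * z.1 * z.2)‖ < 1)) := by
  have h2 : ‖((Real.sqrt 2 : ℂ))‖ = Real.sqrt 2 := by
    rw [Complex.norm_real, Real.norm_of_nonneg (Real.sqrt_nonneg 2)]
  have hs2 : (Real.sqrt 2) ^ 2 = 2 := Real.sq_sqrt (by norm_num)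
  constructor
  · intro ζ₁ ζ₂ h1 h2E
    have habs2 : ‖ζ₂‖ = 1 := hEsub h2E
    have hne : (Real.sqrt 2 : ℂ) ≠ 0 := by
      exact_mod_cast (Real.sqrt_pos.mpr two_pos).ne'
    have heq : ‖ζ₁ / (Real.sqrt 2 : ℂ)‖ ^ 2 +
        ‖(starRingEnd ℂ) ζ₁ * ζ₂ / (Real.sqrt 2 : ℂ)‖ ^ 2 = 1 := by
      rw [norm_div, norm_div, norm_mul, Complex.norm_conj, h1, habs2, h2]
      rw [div_pow, div_pow, hs2]
      norm_num
    have hmul : 2 * (ζ₁ / (Real.sqrt 2 : ℂ)) * ((starRingEnd ℂ) ζ₁ * ζ₂ / (Real.sqrt 2 : ℂ)) = ζ₂ := by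
      have hc : (starRingEnd ℂ) ζ₁ * ζ₁ = 1 := by
        rw [mul_comm, Complex.mul_conj]
        simp [← Complex.sq_norm, h1]
      have hr : ((Real.sqrt 2 : ℂ)) * (Real.sqrt 2 : ℂ) = 2 := by
        exact_mod_cast Real.mul_self_sqrt (by norm_num : (0:ℝ) ≤ 2)
      calc 2 * (ζ₁ / (Real.sqrt 2 : ℂ)) * ((starRingEnd ℂ) ζ₁ * ζ₂ / (Real.sqrt 2 : ℂ))
          = ((starRingEnd ℂ) ζ₁ * ζ₁) * ζ₂ * (2 / ((Real.sqrt 2 : ℂ) * (Real.sqrt 2 : ℂ))) := by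
            ring
        _ = ζ₂ := by rw [hc, hr]; norm_num
    refine ⟨⟨le_of_eq heq, ?_⟩, heq⟩
    show 2 * _ * _ ∈ E
    rw [hmul]; exact h2E
  · intro z hz
    have hball : 2 * z.1 * z.2 ∈ Metric.closedBall (0 : ℂ) 1 := by
      rw [Metric.mem_closedBall, dist_zero_right]
      have : ‖2 * z.1 * z.2‖ = 2 * (‖z.1‖ * ‖z.2‖) := by
        simp [norm_mul]; ring
      rw [this]
      nlinarith [sq_nonneg (‖z.1‖ - ‖z.2‖), norm_nonneg z.1,
        norm_nonneg z.2]
    exact ⟨fun h => hpeak₁ _ h, fun h => hpeak₂ _ hball h⟩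
end
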